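/- Let Ω ⊂ ℝ^N be a bounded smooth domain and u a positive solution of -Δu + e^u - 1 = 0 in Ω. Then there exists a constant D (independent of u) such that u(x) ≤ 2 ln(1/ρ(x)) + D for all x ∈ Ω, where ρ(x) = dist(x, ∂Ω). -/

import Mathlib

open MeasureTheory Metric

set_option maxHeartbeats 1000000

noncomputable section

/-- The Laplacian of `f : ℝ^N → ℝ`, as the trace of the second derivative. -/
def laplacian {N : ℕ} (f : EuclideanSpace ℝ (Fin N) → ℝ)
    (x : EuclideanSpace ℝ (Fin N)) : ℝ :=
  ∑ i : Fin N, iteratedFDeriv ℝ 2 f x (fun _ => EuclideanSpace.single i (1 : ℝ))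


/-- 1D second derivative test at a local minimum. -/
lemma second_deriv_nonneg_of_min {g : ℝ → ℝ} {ε : ℝ} (hε : 0 < ε)
    (hg : ContDiffOn ℝ 2 g (Set.Ioo (-ε) ε))
    (hmin : ∀ t ∈ Set.Ioo (-ε) ε, g 0 ≤ g t) :
    0 ≤ deriv (deriv g) 0 := by
  by_contra hlt
  push_neg at hlt
  have hI : IsOpen (Set.Ioo (-ε : ℝ) ε) := isOpen_Ioo
  have h0mem : (0:ℝ) ∈ Set.Ioo (-ε) ε := by constructor <;> simp [hε, neg_lt_zero]
  have h1 : ContDiffOn ℝ 1 (deriv g) (Set.Ioo (-ε) ε) :=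
    hg.deriv_of_isOpen hI (by norm_num)
  have h2 : ContinuousOn (deriv (deriv g)) (Set.Ioo (-ε) ε) :=
    h1.continuousOn_deriv_of_isOpen hI le_rfl
  have hc : ContinuousAt (deriv (deriv g)) 0 :=
    h2.continuousAt (hI.mem_nhds h0mem)
  have hev : ∀ᶠ t in nhds (0:ℝ), deriv (deriv g) t < 0 :=
    hc.eventually_lt continuousAt_const hlt
  have hev2 : ∀ᶠ t in nhds (0:ℝ), deriv (deriv g) t < 0 ∧ t ∈ Set.Ioo (-ε) ε :=
    hev.and (hI.mem_nhds h0mem)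
  obtain ⟨δ, hδpos, hδ⟩ := Metric.eventually_nhds_iff_ball.mp hev2
  set δ' := min δ ε with hδ'
  have hδ'pos : 0 < δ' := lt_min hδpos hε
  have hsub : Set.Ioo (-(δ'/2)) (δ'/2) ⊆ Metric.ball (0:ℝ) δ := by
    intro t ht
    rw [Metric.mem_ball, Real.dist_eq, sub_zero, abs_lt]
    constructor
    · linarith [ht.1, min_le_left δ ε]
    · linarith [ht.2, min_le_left δ ε]
  have hconc : StrictConcaveOn ℝ (Set.Ioo (-(δ'/2)) (δ'/2)) g := by
    apply strictConcaveOn_of_deriv2_neg (convex_Ioo _ _)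
    · apply hg.continuousOn.mono
      intro t ht
      have := hδ t (hsub ht)
      exact this.2
    · intro t ht
      rw [interior_Ioo] at ht
      exact (hδ t (hsub ht)).1
  have ha : (-(δ'/4) : ℝ) ∈ Set.Ioo (-(δ'/2)) (δ'/2) := by
    constructor <;> [linarith; linarith]
  have hb : ((δ'/4) : ℝ) ∈ Set.Ioo (-(δ'/2)) (δ'/2) := by
    constructor <;> [linarith; linarith]
  have hne : (-(δ'/4) : ℝ) ≠ δ'/4 := by linarith
  have := hconc.2 ha hb hne (by norm_num : (0:ℝ) < 1/2) (by norm_num : (0:ℝ) < 1/2) (by norm_num)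
  simp only [smul_eq_mul] at this
  rw [show (1/2 : ℝ) * (-(δ'/4)) + (1/2 : ℝ) * (δ'/4 : ℝ) = 0 by ring] at this
  have hmem : ∀ s ∈ Set.Ioo (-(δ'/2)) (δ'/2), s ∈ Set.Ioo (-ε) ε := by
    intro s hs
    exact (hδ s (hsub hs)).2
  have h1' := hmin _ (hmem _ ha)
  have h2' := hmin _ (hmem _ hb)
  linarith


lemma line_hasDerivAt {N : ℕ} (x e : EuclideanSpace ℝ (Fin N)) (t : ℝ) :
    HasDerivAt (fun s : ℝ => x + s • e) e t := by
  have h := ((hasDerivAt_id t).smul_const e).const_add x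
  simpa using h

/-- Слice lemma: second directional derivative as 1D second derivative. -/
lemma iteratedFDeriv_two_slice {N : ℕ} {f : EuclideanSpace ℝ (Fin N) → ℝ}
    {x : EuclideanSpace ℝ (Fin N)} (hf : ContDiffAt ℝ 2 f x)
    (e : EuclideanSpace ℝ (Fin N)) :
    iteratedFDeriv ℝ 2 f x (fun _ => e)
      = deriv (deriv (fun t : ℝ => f (x + t • e))) 0 := by
  have h2 : iteratedFDeriv ℝ 2 f x (fun _ => e) = fderiv ℝ (fderiv ℝ f) x e e :=
    iteratedFDeriv_two_apply f x (fun _ => e)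
  rw [h2]
  -- eventually C² hence differentiable near x
  have hev : ∀ᶠ y in nhds x, ContDiffAt ℝ 2 f y := hf.eventually (by simp)
  have hevd : ∀ᶠ y in nhds x, DifferentiableAt ℝ f y :=
    hev.mono fun y hy => hy.differentiableAt (by norm_num)
  -- the curve
  have hcont : Continuous fun t : ℝ => x + t • e := by continuity
  have hc0 : (fun t : ℝ => x + t • e) 0 = x := by simp
  have hevt : ∀ᶠ t in nhds (0:ℝ), DifferentiableAt ℝ f (x + t • e) := by
    have h := hcont.continuousAt (x := (0:ℝ))
    rw [ContinuousAt] at h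
    simp only [zero_smul, add_zero] at h
    exact h.eventually hevd
  -- first derivative of the slice
  have hder : (fun t : ℝ => deriv (fun s : ℝ => f (x + s • e)) t)
      =ᶠ[nhds (0:ℝ)] fun t => fderiv ℝ f (x + t • e) e := by
    filter_upwards [hevt] with t ht
    exact (ht.hasFDerivAt.comp_hasDerivAt t (line_hasDerivAt x e t)).deriv
  rw [hder.deriv_eq]
  -- second derivative
  have hd2 : DifferentiableAt ℝ (fderiv ℝ f) x :=
    (hf.fderiv_right (m := 1) (by norm_num)).differentiableAt (by norm_num)
  have happ : HasFDerivAt (fun y => fderiv ℝ f y e)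
      ((ContinuousLinearMap.apply ℝ ℝ e).comp (fderiv ℝ (fderiv ℝ f) x)) x :=
    (ContinuousLinearMap.apply ℝ ℝ e).hasFDerivAt.comp x hd2.hasFDerivAt
  have hxeq : x = x + (0:ℝ) • e := by simp
  have hcomp := happ.comp_hasDerivAt_of_eq 0 (line_hasDerivAt x e 0) hxeq
  have : HasDerivAt (fun t : ℝ => fderiv ℝ f (x + t • e) e)
      (fderiv ℝ (fderiv ℝ f) x e e) 0 := hcomp
  rw [this.deriv]


lemma quad_hasDerivAt (A b : ℝ) (t : ℝ) :
    HasDerivAt (fun s : ℝ => A - 2*b*s - s^2) (-(2*b) - 2*t) t := by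
  have h := ((hasDerivAt_const t A).sub ((hasDerivAt_id t).const_mul (2*b))).sub
    (hasDerivAt_pow 2 t)
  convert h using 1
  all_goals try rfl
  ring

lemma deriv2_log_quad (A b c' : ℝ) (hA : 0 < A) :
    deriv (deriv (fun t : ℝ => c' - 2 * Real.log (A - 2*b*t - t^2))) 0
      = (4*A + 8*b^2)/A^2 := by
  set q : ℝ → ℝ := fun s => A - 2*b*s - s^2 with hqdef
  have hq : ∀ t, HasDerivAt q (-(2*b) - 2*t) t := quad_hasDerivAt A b
  have hq0 : q 0 = A := by simp [hqdef]
  have hqc : ContinuousAt q 0 := (hq 0).continuousAt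
  have hpos : ∀ᶠ t in nhds (0:ℝ), 0 < q t := by
    have := continuousAt_const.eventually_lt hqc (by rw [hq0]; exact hA)
    exact this
  have hder : deriv (fun t : ℝ => c' - 2 * Real.log (A - 2*b*t - t^2))
      =ᶠ[nhds (0:ℝ)] fun t => -2 * ((q t)⁻¹ * (-(2*b) - 2*t)) := by
    filter_upwards [hpos] with t ht
    have hlog : HasDerivAt (fun s => Real.log (q s)) ((q t)⁻¹ * (-(2*b) - 2*t)) t :=
      (Real.hasDerivAt_log (ne_of_gt ht)).comp t (hq t)
    have hg : HasDerivAt (fun s : ℝ => c' - 2 * Real.log (A - 2*b*s - s^2))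
        (-2 * ((q t)⁻¹ * (-(2*b) - 2*t))) t := by
      have := (hasDerivAt_const t c').sub (hlog.const_mul 2)
      convert this using 1
      all_goals try rfl
      ring
    exact hg.deriv
  rw [hder.deriv_eq]
  have hinv : HasDerivAt (fun t : ℝ => (q t)⁻¹) (-(-(2*b) - 2*0) / (q 0)^2) 0 :=
    (hq 0).inv (by rw [hq0]; exact ne_of_gt hA)
  have hn : HasDerivAt (fun t : ℝ => -(2*b) - 2*t) (-2 : ℝ) 0 := by
    have := (hasDerivAt_const (0:ℝ) (-(2*b))).sub ((hasDerivAt_id (0:ℝ)).const_mul 2)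
    convert this using 1
    all_goals try rfl
    ring
  have hmul : HasDerivAt (fun t : ℝ => -2 * ((q t)⁻¹ * (-(2*b) - 2*t))) _ 0 :=
    (hinv.mul hn).const_mul (-2 : ℝ)
  rw [hmul.deriv]
  rw [hq0]
  field_simp
  ring


lemma bubble_contDiffAt {N : ℕ} (x₀ : EuclideanSpace ℝ (Fin N)) (r c' : ℝ)
    {y : EuclideanSpace ℝ (Fin N)} (hne : r^2 - ‖y - x₀‖^2 ≠ 0) :
    ContDiffAt ℝ 2 (fun w => c' - 2 * Real.log (r^2 - ‖w - x₀‖^2)) y := by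
  have hφ : ContDiff ℝ 2 (fun w : EuclideanSpace ℝ (Fin N) => r^2 - ‖w - x₀‖^2) :=
    contDiff_const.sub ((contDiff_norm_sq (𝕜 := ℝ)).comp (contDiff_id.sub contDiff_const))
  have hlog : ContDiffAt ℝ 2 Real.log (r^2 - ‖y - x₀‖^2) := Real.contDiffAt_log.mpr hne
  exact contDiffAt_const.sub (contDiffAt_const.mul (ContDiffAt.comp (g := Real.log) y hlog hφ.contDiffAt))

lemma norm_sq_sum {N : ℕ} (z : EuclideanSpace ℝ (Fin N)) :
    ∑ i : Fin N, (z i)^2 = ‖z‖^2 := by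
  rw [← real_inner_self_eq_norm_sq]
  simp only [PiLp.inner_apply, RCLike.inner_apply, conj_trivial, pow_two]

lemma laplacian_bubble {N : ℕ} (x₀ : EuclideanSpace ℝ (Fin N)) (r c' : ℝ)
    {y : EuclideanSpace ℝ (Fin N)} (hy : y ∈ ball x₀ r) :
    laplacian (fun w => c' - 2 * Real.log (r^2 - ‖w - x₀‖^2)) y
      = (4*N*(r^2 - ‖y - x₀‖^2) + 8*‖y - x₀‖^2) / (r^2 - ‖y - x₀‖^2)^2 := by
  set z := y - x₀ with hzdef
  have hz : ‖z‖ < r := by rw [mem_ball, dist_eq_norm] at hy; exact hy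
  have hA : 0 < r^2 - ‖z‖^2 := by nlinarith [norm_nonneg z]
  have key : ∀ i : Fin N,
      iteratedFDeriv ℝ 2 (fun w => c' - 2 * Real.log (r^2 - ‖w - x₀‖^2)) y
        (fun _ => EuclideanSpace.single i (1:ℝ))
      = (4*(r^2 - ‖z‖^2) + 8*(z i)^2)/(r^2 - ‖z‖^2)^2 := by
    intro i
    rw [iteratedFDeriv_two_slice (bubble_contDiffAt x₀ r c' (ne_of_gt hA)) _]
    have hfun : (fun t : ℝ =>
        (fun w => c' - 2 * Real.log (r^2 - ‖w - x₀‖^2)) (y + t • EuclideanSpace.single i (1:ℝ)))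
        = fun t : ℝ => c' - 2 * Real.log ((r^2 - ‖z‖^2) - 2*(z i)*t - t^2) := by
      funext t
      have harg : y + t • EuclideanSpace.single i (1:ℝ) - x₀
          = z + t • EuclideanSpace.single i (1:ℝ) := by
        rw [hzdef]; abel
      simp only [harg]
      rw [norm_add_sq_real, real_inner_smul_right, EuclideanSpace.inner_single_right,
        norm_smul]
      simp only [EuclideanSpace.norm_single, norm_one, mul_one, Real.norm_eq_abs,
        mul_pow, sq_abs, starRingEnd_apply, star_trivial]
      ring_nf
    rw [hfun, deriv2_log_quad _ _ _ hA]
  unfold laplacian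
  rw [Finset.sum_congr rfl (fun i _ => key i), ← Finset.sum_div]
  congr 1
  rw [Finset.sum_add_distrib, Finset.sum_const, Finset.card_univ, Fintype.card_fin,
    ← Finset.mul_sum, norm_sq_sum]
  push_cast
  ring

lemma deriv2_sub {a b : ℝ → ℝ} {ε : ℝ} (hε : 0 < ε)
    (ha : ContDiffOn ℝ 2 a (Set.Ioo (-ε) ε)) (hb : ContDiffOn ℝ 2 b (Set.Ioo (-ε) ε)) :
    deriv (deriv (fun t => a t - b t)) 0 = deriv (deriv a) 0 - deriv (deriv b) 0 := by
  have hI : IsOpen (Set.Ioo (-ε : ℝ) ε) := isOpen_Ioo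
  have h0 : (0:ℝ) ∈ Set.Ioo (-ε : ℝ) ε := ⟨by linarith, hε⟩
  have hmem : Set.Ioo (-ε : ℝ) ε ∈ nhds (0:ℝ) := hI.mem_nhds h0
  have h1 : (fun t => deriv (fun s => a s - b s) t)
      =ᶠ[nhds (0:ℝ)] fun t => deriv a t - deriv b t := by
    filter_upwards [hmem] with t ht
    exact deriv_sub ((ha.contDiffAt (hI.mem_nhds ht)).differentiableAt (by norm_num))
      ((hb.contDiffAt (hI.mem_nhds ht)).differentiableAt (by norm_num))
  rw [h1.deriv_eq]
  have hda : DifferentiableAt ℝ (deriv a) 0 :=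
    ((ha.deriv_of_isOpen (m := 1) hI (by norm_num)).contDiffAt hmem).differentiableAt (by norm_num)
  have hdb : DifferentiableAt ℝ (deriv b) 0 :=
    ((hb.deriv_of_isOpen (m := 1) hI (by norm_num)).contDiffAt hmem).differentiableAt (by norm_num)
  exact deriv_sub hda hdb


/-- Keller–Osserman estimate: there is a constant `D` (independent of `u`) such that
any positive `C²` solution of `-Δu + e^u - 1 = 0` in a bounded domain `Ω` satisfies
`u(x) ≤ 2 ln(1/ρ(x)) + D`, with `ρ(x) = dist(x, ∂Ω)`. -/
theorem keller_osserman {N : ℕ} (Ω : Set (EuclideanSpace ℝ (Fin N)))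
    (hΩo : IsOpen Ω) (hΩb : Bornology.IsBounded Ω) (hΩne : Ω.Nonempty) :
    ∃ D : ℝ, ∀ u : EuclideanSpace ℝ (Fin N) → ℝ,
      ContDiffOn ℝ 2 u Ω → (∀ x ∈ Ω, 0 < u x) →
      (∀ x ∈ Ω, laplacian u x = Real.exp (u x) - 1) →
      ∀ x ∈ Ω, u x ≤ 2 * Real.log (1 / infDist x (frontier Ω)) + D := by
  rcases Nat.eq_zero_or_pos N with hN | hN
  · -- N = 0 : the equation forces u = 0, contradicting positivity
    subst hN
    refine ⟨0, fun u hu hupos hlap x hx => absurd (hlap x hx) ?_⟩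
    unfold laplacian
    simp only [Finset.univ_eq_empty, Finset.sum_empty]
    intro h
    have : Real.exp (u x) = 1 := by linarith
    rw [Real.exp_eq_one_iff] at this
    exact absurd this (ne_of_gt (hupos x hx))
  -- N ≥ 1
  haveI hnt : Nontrivial (EuclideanSpace ℝ (Fin N)) := by
    refine ⟨⟨EuclideanSpace.single ⟨0, hN⟩ (1:ℝ), 0, fun h => ?_⟩⟩
    have := congrArg norm h
    simp at this
  have hfr : (frontier Ω).Nonempty := by
    rw [nonempty_frontier_iff]
    refine ⟨hΩne, fun h => NormedSpace.unbounded_univ (𝕜 := ℝ)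
      (E := EuclideanSpace ℝ (Fin N)) (h ▸ hΩb)⟩
  obtain ⟨R₀, hR₀⟩ := hΩb.subset_closedBall (0 : EuclideanSpace ℝ (Fin N))
  set R := max R₀ 0 with hRdef
  have hRnn : 0 ≤ R := le_max_right _ _
  have hR : Ω ⊆ closedBall 0 R := hR₀.trans (closedBall_subset_closedBall (le_max_left _ _))
  have hclos : closure Ω ⊆ closedBall 0 R := closure_minimal hR isClosed_closedBall
  set K := 4*(N:ℝ) + 8 + (2*R)^2 with hKdef
  have hKpos : (0:ℝ) < K := by positivity
  refine ⟨Real.log K, ?_⟩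
  intro u hu hupos hlap x₀ hx₀
  set ρ := infDist x₀ (frontier Ω) with hρdef
  have hx₀nf : x₀ ∉ frontier Ω := fun hf =>
    (Set.eq_empty_iff_forall_notMem.mp hΩo.inter_frontier_eq x₀) ⟨hx₀, hf⟩
  have hρpos : 0 < ρ := by
    rcases eq_or_lt_of_le (infDist_nonneg : 0 ≤ ρ) with h | h
    · exfalso
      apply hx₀nf
      rw [← isClosed_frontier.closure_eq]
      exact (mem_closure_iff_infDist_zero hfr).mpr h.symm
    · exact h
  have hdisj : ∀ y ∈ ball x₀ ρ, y ∉ frontier Ω := by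
    intro y hy hyf
    have h1 : ρ ≤ dist x₀ y := infDist_le_dist_of_mem hyf
    rw [mem_ball, dist_comm] at hy
    linarith
  have hball : ball x₀ ρ ⊆ Ω := by
    intro y hy
    by_contra hyΩ
    have hcover : ball x₀ ρ ⊆ Ω ∪ (closure Ω)ᶜ := by
      intro p hp
      by_cases hpΩ : p ∈ Ω
      · exact Or.inl hpΩ
      · refine Or.inr fun hpc => hdisj p hp ?_
        rw [hΩo.frontier_eq]
        exact ⟨hpc, hpΩ⟩
    have hyc : y ∈ (closure Ω)ᶜ := by
      intro hycl
      exact hdisj y hy (by rw [hΩo.frontier_eq]; exact ⟨hycl, hyΩ⟩)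
    obtain ⟨p, _, hp⟩ := (convex_ball x₀ ρ).isPreconnected Ω ((closure Ω)ᶜ) hΩo
      isClosed_closure.isOpen_compl hcover ⟨x₀, mem_ball_self hρpos, hx₀⟩ ⟨y, hy, hyc⟩
    exact hp.2 (subset_closure hp.1)
  have hρle : ρ ≤ 2*R := by
    obtain ⟨zf, hzf⟩ := hfr
    have h1 : ρ ≤ dist x₀ zf := infDist_le_dist_of_mem hzf
    have h2 : ‖x₀‖ ≤ R := by
      have := hR hx₀
      rwa [mem_closedBall, dist_zero_right] at this
    have h3 : ‖zf‖ ≤ R := by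
      have := hclos (frontier_subset_closure hzf)
      rwa [mem_closedBall, dist_zero_right] at this
    have h4 : dist x₀ zf ≤ ‖x₀‖ + ‖zf‖ := by
      rw [dist_eq_norm]
      exact (norm_sub_le _ _)
    linarith
  -- key claim
  have key : ∀ r : ℝ, 0 < r → r < ρ → u x₀ < Real.log K - 2*Real.log r := by
    intro r hr hrρ
    have hballr : closedBall x₀ r ⊆ Ω := fun y hy =>
      hball (mem_ball.mpr (lt_of_le_of_lt (mem_closedBall.mp hy) hrρ))
    set c' := Real.log K + 2*Real.log r with hc'def
    set v : EuclideanSpace ℝ (Fin N) → ℝ :=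
      fun w => c' - 2*Real.log (r^2 - ‖w - x₀‖^2) with hvdef
    have hApos : ∀ y ∈ ball x₀ r, 0 < r^2 - ‖y - x₀‖^2 := by
      intro y hy
      rw [mem_ball, dist_eq_norm] at hy
      nlinarith [norm_nonneg (y - x₀)]
    have hvC : ∀ y ∈ ball x₀ r, ContDiffAt ℝ 2 v y := fun y hy =>
      bubble_contDiffAt x₀ r c' (ne_of_gt (hApos y hy))
    have huC : ∀ y ∈ Ω, ContDiffAt ℝ 2 u y := fun y hy =>
      hu.contDiffAt (hΩo.mem_nhds hy)
    -- bound for u on the closed ball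
    obtain ⟨ym, hym, hymax⟩ := (isCompact_closedBall x₀ r).exists_isMaxOn
      ⟨x₀, mem_closedBall_self hr.le⟩ (hu.continuousOn.mono hballr)
    set M := u ym with hMdef
    have hM : ∀ y ∈ closedBall x₀ r, u y ≤ M := fun y hy => hymax hy
    -- value of exp ∘ v
    have hlogr2 : Real.log (r^2) = 2 * Real.log r := by
      have h := Real.log_pow r 2
      push_cast at h
      exact h
    have hexpv : ∀ y ∈ ball x₀ r,
        Real.exp (v y) = K*r^2/(r^2 - ‖y - x₀‖^2)^2 := by
      intro y hy
      have hA := hApos y hy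
      rw [hvdef]
      simp only
      rw [Real.exp_sub, Real.exp_add]
      rw [Real.exp_log hKpos]
      rw [show (2:ℝ)*Real.log r = Real.log (r^2) from hlogr2.symm,
        Real.exp_log (by positivity)]
      have h2 := Real.log_pow (r^2 - ‖y - x₀‖^2) 2
      push_cast at h2
      rw [show (2:ℝ)*Real.log (r^2 - ‖y - x₀‖^2)
          = Real.log ((r^2 - ‖y - x₀‖^2)^2) from h2.symm,
        Real.exp_log (by positivity)]
    -- strict supersolution property
    have hsuper : ∀ y ∈ ball x₀ r, laplacian v y < Real.exp (v y) - 1 := by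
      intro y hy
      rw [hvdef]
      rw [laplacian_bubble x₀ r c' hy, hexpv y hy]
      have hA := hApos y hy
      have hs0 : 0 ≤ ‖y - x₀‖^2 := sq_nonneg _
      have hsr : ‖y - x₀‖^2 < r^2 := by linarith
      have hA2 : (0:ℝ) < (r^2 - ‖y - x₀‖^2)^2 := by positivity
      have hKr : K*r^2/(r^2 - ‖y - x₀‖^2)^2 - 1
          = (K*r^2 - (r^2 - ‖y - x₀‖^2)^2)/(r^2 - ‖y - x₀‖^2)^2 := by
        field_simp
      rw [hKr, div_lt_div_iff₀ hA2 hA2]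
      have hrR : r ≤ 2*R := by linarith
      have hNnn : (0:ℝ) ≤ (N:ℝ) := Nat.cast_nonneg N
      have hb1 : r^2 - ‖y - x₀‖^2 ≤ r^2 := by linarith
      have hr2R : r^2 ≤ (2*R)^2 := by nlinarith
      rw [hKdef]
      nlinarith [sq_nonneg (r^2 - ‖y - x₀‖^2), mul_pos hA2 hA2,
        mul_le_mul_of_nonneg_left hb1 hA.le,
        mul_le_mul_of_nonneg_left hr2R (mul_pos hr hr).le,
        mul_le_mul_of_nonneg_left hb1 hNnn]
    -- choice of inner radius
    set ε₀ := Real.exp (Real.log (r^2) - M/2) with hε₀def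
    have hε₀pos : 0 < ε₀ := Real.exp_pos _
    set ε := min (ε₀/2) (r^2/2) with hεdef
    have hεpos : 0 < ε := lt_min (by positivity) (by positivity)
    have hεlt : ε < ε₀ := lt_of_le_of_lt (min_le_left _ _) (by linarith)
    have hεler : ε ≤ r^2/2 := min_le_right _ _
    have hr2pos : 0 < r^2 := by positivity
    have hεr2 : ε < r^2 := by linarith
    set r'' := Real.sqrt (r^2 - ε) with hr''def
    have hr''sq : r''^2 = r^2 - ε := Real.sq_sqrt (by linarith)
    have hr''pos : 0 < r'' := Real.sqrt_pos.mpr (by linarith)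
    have hr''lt : r'' < r := by
      have h := Real.sqrt_lt_sqrt (by linarith) (show r^2 - ε < r^2 by linarith)
      rwa [Real.sqrt_sq hr.le] at h
    have hsub'' : closedBall x₀ r'' ⊆ ball x₀ r := closedBall_subset_ball hr''lt
    -- minimise w = v - u on the closed ball of radius r''
    set w : EuclideanSpace ℝ (Fin N) → ℝ := fun y => v y - u y with hwdef
    have hwcont : ContinuousOn w (closedBall x₀ r'') := by
      apply ContinuousOn.sub
      · exact fun y hy => ((hvC y (hsub'' hy)).continuousAt).continuousWithinAt
      · exact (hu.continuousOn.mono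
          (hsub''.trans (ball_subset_closedBall.trans hballr))).mono (fun y hy => hy)
    obtain ⟨ys, hys, hysmin⟩ := (isCompact_closedBall x₀ r'').exists_isMinOn
      ⟨x₀, mem_closedBall_self hr''pos.le⟩ hwcont
    have hwmin : ∀ y ∈ closedBall x₀ r'', w ys ≤ w y := fun y hy => hysmin hy
    have hvx₀ : v x₀ = Real.log K - 2*Real.log r := by
      rw [hvdef]
      simp only [sub_self, norm_zero]
      rw [show (0:ℝ)^2 = 0 by norm_num, sub_zero, hlogr2, hc'def]
      ring
    -- the minimiser is interior
    have hysint : dist ys x₀ < r'' := by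
      by_contra hge
      push_neg at hge
      have heq : dist ys x₀ = r'' := le_antisymm (mem_closedBall.mp hys) hge
      have hnorm : ‖ys - x₀‖ = r'' := by rw [← dist_eq_norm]; exact heq
      have hAeq : r^2 - ‖ys - x₀‖^2 = ε := by rw [hnorm, hr''sq]; ring
      have hvys : v ys = c' - 2*Real.log ε := by rw [hvdef]; simp only; rw [hAeq]
      have huys : u ys ≤ M := hM ys (closedBall_subset_closedBall hr''lt.le hys)
      have hlogε : Real.log ε < Real.log (r^2) - M/2 := by
        have := (Real.log_lt_iff_lt_exp hεpos).mpr (by rw [← hε₀def]; exact hεlt)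
        exact this
      have hwx₀ : w x₀ < v x₀ := by
        have := hupos x₀ hx₀
        rw [hwdef]; simp only; linarith
      have hcontr : w x₀ < w ys := by
        rw [hvx₀] at hwx₀
        have hwys : c' - 2*Real.log ε - M ≤ w ys := by
          rw [hwdef]; simp only; rw [hvys]; linarith
        rw [hc'def] at hwys
        have : Real.log K - 2*Real.log r < c' - 2*Real.log ε - M := by
          rw [hc'def]
          linarith [hlogε, hlogr2]
        rw [hc'def] at this
        linarith
      exact absurd (hwmin x₀ (mem_closedBall_self hr''pos.le)) (not_le.mpr hcontr)
    -- second derivative test at the interior minimum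
    set ε₂ := r'' - dist ys x₀ with hε₂def
    have hε₂pos : 0 < ε₂ := by rw [hε₂def]; linarith
    have hysball : ys ∈ ball x₀ r := hsub'' hys
    have hysΩ : ys ∈ Ω := hballr (ball_subset_closedBall hysball)
    have hmemcb : ∀ (t : ℝ), t ∈ Set.Ioo (-ε₂) ε₂ → ∀ i : Fin N,
        ys + t • EuclideanSpace.single i (1:ℝ) ∈ closedBall x₀ r'' := by
      intro t ht i
      rw [mem_closedBall]
      have h1 : dist (ys + t • EuclideanSpace.single i (1:ℝ)) ys = |t| := by
        rw [dist_eq_norm, add_sub_cancel_left, norm_smul]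
        simp [Real.norm_eq_abs]
      have h2 : |t| < ε₂ := abs_lt.mpr ⟨ht.1, ht.2⟩
      calc dist (ys + t • EuclideanSpace.single i (1:ℝ)) x₀
          ≤ dist (ys + t • EuclideanSpace.single i (1:ℝ)) ys + dist ys x₀ :=
            dist_triangle _ _ _
        _ ≤ r'' := by rw [h1]; rw [hε₂def] at h2; linarith [abs_nonneg t]
    -- slices
    have hslice : ∀ i : Fin N,
        iteratedFDeriv ℝ 2 v ys (fun _ => EuclideanSpace.single i (1:ℝ))
          - iteratedFDeriv ℝ 2 u ys (fun _ => EuclideanSpace.single i (1:ℝ)) ≥ 0 := by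
      intro i
      set e := EuclideanSpace.single i (1:ℝ) with hedef
      have hline : ContDiff ℝ 2 (fun t : ℝ => ys + t • e) :=
        contDiff_const.add (contDiff_id.smul contDiff_const)
      have hmemΩ : ∀ t ∈ Set.Ioo (-ε₂) ε₂, ys + t • e ∈ closedBall x₀ r'' :=
        fun t ht => hmemcb t ht i
      have hvO : ContDiffOn ℝ 2 v (ball x₀ r) := fun y hy => (hvC y hy).contDiffWithinAt
      have hmaps : Set.MapsTo (fun t : ℝ => ys + t • e) (Set.Ioo (-ε₂) ε₂) (ball x₀ r) :=
        fun t ht => hsub'' (hmemΩ t ht)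
      have hmaps' : Set.MapsTo (fun t : ℝ => ys + t • e) (Set.Ioo (-ε₂) ε₂) Ω :=
        fun t ht => hballr (ball_subset_closedBall (hsub'' (hmemΩ t ht)))
      have hsv : ContDiffOn ℝ 2 (fun t : ℝ => v (ys + t • e)) (Set.Ioo (-ε₂) ε₂) :=
        hvO.comp (hline.contDiffOn) hmaps
      have hsu : ContDiffOn ℝ 2 (fun t : ℝ => u (ys + t • e)) (Set.Ioo (-ε₂) ε₂) :=
        hu.comp (hline.contDiffOn) hmaps'
      have hminw : ∀ t ∈ Set.Ioo (-ε₂) ε₂,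
          (fun t : ℝ => w (ys + t • e)) 0 ≤ (fun t : ℝ => w (ys + t • e)) t := by
        intro t ht
        simp only [zero_smul, add_zero]
        exact hwmin _ (hmemΩ t ht)
      have hsw : ContDiffOn ℝ 2 (fun t : ℝ => w (ys + t • e)) (Set.Ioo (-ε₂) ε₂) := by
        rw [hwdef]
        exact hsv.sub hsu
      have h2nd : 0 ≤ deriv (deriv (fun t : ℝ => w (ys + t • e))) 0 :=
        second_deriv_nonneg_of_min hε₂pos hsw hminw
      have hsplit : deriv (deriv (fun t : ℝ => w (ys + t • e))) 0
          = deriv (deriv (fun t : ℝ => v (ys + t • e))) 0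
            - deriv (deriv (fun t : ℝ => u (ys + t • e))) 0 := by
        rw [hwdef]
        exact deriv2_sub hε₂pos hsv hsu
      rw [iteratedFDeriv_two_slice (hvC ys hysball) e,
        iteratedFDeriv_two_slice (huC ys hysΩ) e]
      rw [hsplit] at h2nd
      linarith
    have hlapge : 0 ≤ laplacian v ys - laplacian u ys := by
      unfold laplacian
      rw [← Finset.sum_sub_distrib]
      exact Finset.sum_nonneg fun i _ => hslice i
    have h1 : laplacian u ys = Real.exp (u ys) - 1 := hlap ys hysΩ
    have h2 : laplacian v ys < Real.exp (v ys) - 1 := hsuper ys hysball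
    have huv : u ys < v ys := by
      apply Real.exp_lt_exp.mp
      linarith
    have hwys : 0 < w ys := sub_pos.mpr huv
    have hfin : w ys ≤ w x₀ := hwmin x₀ (mem_closedBall_self hr''pos.le)
    have : 0 < v x₀ - u x₀ := by rw [hwdef] at hwys hfin; simp only at hwys hfin; linarith
    rw [hvx₀] at this
    linarith
  -- conclude
  have hle : ρ ≤ Real.exp ((Real.log K - u x₀)/2) := by
    by_contra hgt
    push_neg at hgt
    set c := Real.exp ((Real.log K - u x₀)/2) with hcdef
    have hcpos : 0 < c := Real.exp_pos _
    set r := max ((c + ρ)/2) (ρ/2) with hrdef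
    have hr1 : 0 < r := lt_of_lt_of_le (by linarith) (le_max_right _ _)
    have hr2 : r < ρ := max_lt (by linarith) (by linarith)
    have hr3 : c < r := lt_of_lt_of_le (by linarith) (le_max_left _ _)
    have := key r hr1 hr2
    -- u x₀ < log K - 2 log r  ⇒  log r ≤ (log K - u x₀)/2 ⇒ r ≤ c
    have hlogr : Real.log r < (Real.log K - u x₀)/2 := by linarith
    have : r < Real.exp ((Real.log K - u x₀)/2) :=
      (Real.log_lt_iff_lt_exp hr1).mp hlogr
    linarith
  have hlogρ : Real.log ρ ≤ (Real.log K - u x₀)/2 := by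
    have := Real.log_le_log hρpos hle
    rwa [Real.log_exp] at this
  have : Real.log (1/ρ) = -Real.log ρ := by
    rw [one_div, Real.log_inv]
  rw [hρdef] at *
  rw [this]
  linarith
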